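/- All-time marginal fluctuation symmetry of the moment generating function (marginal FR theorem): Let M̃ q' be the tilted operator built from W̃ := P * (M Q)ᵀ * P⁻¹ in the same way M is built from W, i.e. (M̃ q') i_μ j_μ = W̃ i_μ j_μ * Real.exp (−q' μ), (M̃ q') j_μ i_μ = W̃ j_μ i_μ * Real.exp (q' μ), and M̃ q' agrees with W̃ elsewhere. Then for every t : ℝ and every q : Fin m → ℝ, ∑ i, (Matrix.exp (t • M q) *ᵥ p) i = ∑ i, (Matrix.exp (t • M̃ (Q − q)) *ᵥ p) i; that is, when the initial state is the stalling state p, the moment generating functions of the observable currents for the forward dynamics at counting fields q and for the hidden time-reversal dynamics at counting fields Q − q coincide at all times. -/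

import Mathlib

open Matrix

/-- All-time marginal fluctuation symmetry of the moment generating function
(marginal fluctuation relation theorem). -/
theorem all_time_marginal_fluctuation_symmetry {n m : ℕ}
    (W Whid : Matrix (Fin n) (Fin n) ℝ)
    (hW1 : ∀ i j, i ≠ j → 0 ≤ W i j)
    (hW2 : ∀ j, ∑ i, W i j = 0)
    (ei ej : Fin m → Fin n)
    (hij : ∀ μ, ei μ ≠ ej μ)
    (hdist : ∀ μ ν, μ ≠ ν → ({ei μ, ej μ} : Finset (Fin n)) ≠ {ei ν, ej ν})
    (hpos1 : ∀ μ, 0 < W (ei μ) (ej μ))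
    (hpos2 : ∀ μ, 0 < W (ej μ) (ei μ))
    (hH1 : ∀ μ, Whid (ei μ) (ej μ) = 0)
    (hH2 : ∀ μ, Whid (ej μ) (ei μ) = 0)
    (hH3 : ∀ i, Whid i i = W i i
        + ∑ μ ∈ Finset.univ.filter (fun μ => ej μ = i), W (ei μ) (ej μ)
        + ∑ μ ∈ Finset.univ.filter (fun μ => ei μ = i), W (ej μ) (ei μ))
    (hH4 : ∀ i j, i ≠ j →
      (∀ μ, ¬(i = ei μ ∧ j = ej μ) ∧ ¬(i = ej μ ∧ j = ei μ)) → Whid i j = W i j)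
    (p : Fin n → ℝ) (hp1 : ∀ i, 0 < p i) (hp2 : ∑ i, p i = 1)
    (hp3 : Whid *ᵥ p = 0)
    (Q : Fin m → ℝ)
    (hQ : ∀ μ, Q μ = Real.log (W (ei μ) (ej μ) * p (ej μ) / (W (ej μ) (ei μ) * p (ei μ))))
    (M : (Fin m → ℝ) → Matrix (Fin n) (Fin n) ℝ)
    (hM1 : ∀ q μ, M q (ei μ) (ej μ) = W (ei μ) (ej μ) * Real.exp (-q μ))
    (hM2 : ∀ q μ, M q (ej μ) (ei μ) = W (ej μ) (ei μ) * Real.exp (q μ))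
    (hM3 : ∀ q i j, (∀ μ, ¬(i = ei μ ∧ j = ej μ) ∧ ¬(i = ej μ ∧ j = ei μ)) → M q i j = W i j)
    (Wt : Matrix (Fin n) (Fin n) ℝ)
    (hWt : Wt = Matrix.diagonal p * (M Q)ᵀ * (Matrix.diagonal p)⁻¹)
    (Mt : (Fin m → ℝ) → Matrix (Fin n) (Fin n) ℝ)
    (hMt1 : ∀ q μ, Mt q (ei μ) (ej μ) = Wt (ei μ) (ej μ) * Real.exp (-q μ))
    (hMt2 : ∀ q μ, Mt q (ej μ) (ei μ) = Wt (ej μ) (ei μ) * Real.exp (q μ))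
    (hMt3 : ∀ q i j, (∀ μ, ¬(i = ei μ ∧ j = ej μ) ∧ ¬(i = ej μ ∧ j = ei μ)) →
      Mt q i j = Wt i j) :
    ∀ (t : ℝ) (q : Fin m → ℝ),
      ∑ i, (NormedSpace.exp (t • M q) *ᵥ p) i
        = ∑ i, (NormedSpace.exp (t • Mt (Q - q)) *ᵥ p) i := by
  intro t q
  have hpne : ∀ i, p i ≠ 0 := fun i => (hp1 i).ne'
  have hPinv : (Matrix.diagonal p)⁻¹ = Matrix.diagonal (fun i => (p i)⁻¹) := by
    apply Matrix.inv_eq_right_inv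
    rw [Matrix.diagonal_mul_diagonal,
      show (fun i => p i * (p i)⁻¹) = fun _ => (1 : ℝ) from
        funext fun i => mul_inv_cancel₀ (hpne i), Matrix.diagonal_one]
  have hUnit : IsUnit (Matrix.diagonal p) := by
    rw [Matrix.isUnit_iff_isUnit_det, Matrix.det_diagonal, isUnit_iff_ne_zero]
    exact Finset.prod_ne_zero_iff.mpr fun i _ => hpne i
  have hconj : ∀ (A : Matrix (Fin n) (Fin n) ℝ) i j,
      (Matrix.diagonal p * A * (Matrix.diagonal p)⁻¹) i j = p i * A i j * (p j)⁻¹ := by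
    intro A i j
    rw [hPinv, Matrix.mul_diagonal, Matrix.diagonal_mul]
  have key : Mt (Q - q) = Matrix.diagonal p * (M q)ᵀ * (Matrix.diagonal p)⁻¹ := by
    ext i j
    rw [hconj, Matrix.transpose_apply]
    by_cases h1 : ∃ μ, i = ei μ ∧ j = ej μ
    · obtain ⟨μ, rfl, rfl⟩ := h1
      rw [hMt1, hM2, hWt, hconj, Matrix.transpose_apply, hM2]
      have e : Real.exp (Q μ) * Real.exp (-(Q - q) μ) = Real.exp (q μ) := by
        rw [← Real.exp_add, Pi.sub_apply]; ring_nf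
      linear_combination p (ei μ) * W (ej μ) (ei μ) * (p (ej μ))⁻¹ * e
    · by_cases h2 : ∃ μ, i = ej μ ∧ j = ei μ
      · obtain ⟨μ, rfl, rfl⟩ := h2
        rw [hMt2, hM1, hWt, hconj, Matrix.transpose_apply, hM1]
        have e : Real.exp (-Q μ) * Real.exp ((Q - q) μ) = Real.exp (-q μ) := by
          rw [← Real.exp_add, Pi.sub_apply]; ring_nf
        linear_combination p (ej μ) * W (ei μ) (ej μ) * (p (ei μ))⁻¹ * e
      · push_neg at h1 h2
        have h : ∀ μ, ¬(i = ei μ ∧ j = ej μ) ∧ ¬(i = ej μ ∧ j = ei μ) := by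
          intro μ
          constructor
          · rintro ⟨hi, hj⟩; exact (h1 μ hi) hj
          · rintro ⟨hi, hj⟩; exact (h2 μ hi) hj
        have h' : ∀ μ, ¬(j = ei μ ∧ i = ej μ) ∧ ¬(j = ej μ ∧ i = ei μ) := by
          intro μ
          exact ⟨fun ⟨hj, hi⟩ => (h μ).2 ⟨hi, hj⟩, fun ⟨hj, hi⟩ => (h μ).1 ⟨hi, hj⟩⟩
        rw [hMt3 _ _ _ h, hWt, hconj, Matrix.transpose_apply,
          hM3 _ _ _ h', hM3 _ _ _ h']
  have hsmul : t • (Matrix.diagonal p * (M q)ᵀ * (Matrix.diagonal p)⁻¹)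
      = Matrix.diagonal p * (t • M q)ᵀ * (Matrix.diagonal p)⁻¹ := by
    rw [Matrix.transpose_smul, Matrix.mul_smul, Matrix.smul_mul]
  rw [key, hsmul, Matrix.exp_conj _ _ hUnit, Matrix.exp_transpose]
  set E := NormedSpace.exp (t • M q) with hE
  simp only [Matrix.mulVec, dotProduct]
  have : ∀ i j, (Matrix.diagonal p * Eᵀ * (Matrix.diagonal p)⁻¹) i j * p j
      = E j i * p i := by
    intro i j
    rw [hconj, Matrix.transpose_apply, mul_assoc, inv_mul_cancel₀ (hpne j), mul_one,
      mul_comm]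
  simp only [this]
  exact Finset.sum_comm
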